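/- Let ϖ_X, ϖ_C, γ be real numbers with γ ≠ 0, ϖ_C < 0, and ϖ_X·ϖ_C > (3/2)·γ² (band 3.1). Set ζ = ϖ_X − γ²/ϖ_C and α = 2ζ − ϖ_X. Then there exists a real k such that, with β = k² − ϖ_C, one has γ⁴ − 2αβγ² + (α² − ζ²)β² < 0; consequently there exist a real k and a real s > 0 such that D(k,s) = 0. Hence the far field of the discontinuous solitons in band 3.1 is linearly unstable. -/

import Mathlib

/-- A biquadratic `s⁴ + A s² + C` with `C < 0` has a positive real root. -/
lemma biquadratic_pos_root (A C : ℝ) (hC : C < 0) :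
    ∃ s : ℝ, 0 < s ∧ s ^ 4 + A * s ^ 2 + C = 0 := by
  set D := A ^ 2 - 4 * C with hD
  have hD0 : 0 ≤ D := by nlinarith
  have hu : Real.sqrt D ^ 2 = D := Real.sq_sqrt hD0
  have hun : 0 ≤ Real.sqrt D := Real.sqrt_nonneg D
  have ht : 0 < (-A + Real.sqrt D) / 2 := by nlinarith [sq_nonneg (Real.sqrt D - A)]
  refine ⟨Real.sqrt ((-A + Real.sqrt D) / 2), Real.sqrt_pos.mpr ht, ?_⟩
  have hs2 : Real.sqrt ((-A + Real.sqrt D) / 2) ^ 2 = (-A + Real.sqrt D) / 2 :=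
    Real.sq_sqrt ht.le
  have hs4 : Real.sqrt ((-A + Real.sqrt D) / 2) ^ 4 = ((-A + Real.sqrt D) / 2) ^ 2 := by
    rw [show (4:ℕ) = 2 * 2 from rfl, pow_mul, hs2]
  rw [hs4, hs2]
  nlinarith [hu]

/-- Instability of the far field of band 3.1: for `ϖC < 0` and `ϖX·ϖC > (3/2)γ²`, the
constant term of the dispersion quartic is negative for some mode `k`, and hence the
quartic has a positive real root `s`. -/
theorem far_field_unstable_band_3_1
    (ϖX ϖC γ : ℝ) (hγ : γ ≠ 0) (hϖC : ϖC < 0)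
    (hband : ϖX * ϖC > (3/2) * γ ^ 2) :
    (∃ k : ℝ,
      γ ^ 4 - 2 * (2 * (ϖX - γ ^ 2 / ϖC) - ϖX) * (k ^ 2 - ϖC) * γ ^ 2
        + ((2 * (ϖX - γ ^ 2 / ϖC) - ϖX) ^ 2 - (ϖX - γ ^ 2 / ϖC) ^ 2)
          * (k ^ 2 - ϖC) ^ 2 < 0) ∧
    (∃ k s : ℝ, 0 < s ∧
      s ^ 4
        + ((2 * (ϖX - γ ^ 2 / ϖC) - ϖX) ^ 2 + (k ^ 2 - ϖC) ^ 2 + 2 * γ ^ 2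
            - (ϖX - γ ^ 2 / ϖC) ^ 2) * s ^ 2
        + (γ ^ 4 - 2 * (2 * (ϖX - γ ^ 2 / ϖC) - ϖX) * (k ^ 2 - ϖC) * γ ^ 2
            + ((2 * (ϖX - γ ^ 2 / ϖC) - ϖX) ^ 2 - (ϖX - γ ^ 2 / ϖC) ^ 2)
              * (k ^ 2 - ϖC) ^ 2) = 0) := by
  have hγ2 : (0:ℝ) < γ ^ 2 := by positivity
  have hϖCne : ϖC ≠ 0 := ne_of_lt hϖC
  set e : ℝ := γ ^ 2 / ϖC with hedef
  have heq : γ ^ 2 = ϖC * e := by rw [hedef]; field_simp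
  have he : e < 0 := div_neg_of_pos_of_neg hγ2 hϖC
  -- band condition rewritten
  have hb : 2 * ϖX * ϖC > 3 * (ϖC * e) := by rw [← heq]; linarith
  -- 2ϖX - 3e < 0
  have h2x : 2 * ϖX - 3 * e < 0 := by
    nlinarith
  have hM : (2 * ϖX - 3 * e) * (1 - ϖC) - ϖC * e < 0 := by
    nlinarith
  -- constant term at k = 1 is negative
  have hconst : γ ^ 4 - 2 * (2 * (ϖX - e) - ϖX) * ((1:ℝ) ^ 2 - ϖC) * γ ^ 2
        + ((2 * (ϖX - e) - ϖX) ^ 2 - (ϖX - e) ^ 2)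
          * ((1:ℝ) ^ 2 - ϖC) ^ 2 < 0 := by
    have hfac : γ ^ 4 - 2 * (2 * (ϖX - e) - ϖX) * ((1:ℝ) ^ 2 - ϖC) * γ ^ 2
        + ((2 * (ϖX - e) - ϖX) ^ 2 - (ϖX - e) ^ 2) * ((1:ℝ) ^ 2 - ϖC) ^ 2
        = (-e) * ((2 * ϖX - 3 * e) * (1 - ϖC) - ϖC * e) := by
      have h4 : γ ^ 4 = (ϖC * e) ^ 2 := by rw [← heq]; ring
      rw [h4, heq]
      ring
    rw [hfac]
    have h1 : 0 < -e := by linarith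
    nlinarith [mul_pos h1 (neg_pos.mpr hM)]
  constructor
  · exact ⟨1, hconst⟩
  · obtain ⟨s, hs, hroot⟩ := biquadratic_pos_root
      ((2 * (ϖX - e) - ϖX) ^ 2 + ((1:ℝ) ^ 2 - ϖC) ^ 2 + 2 * γ ^ 2 - (ϖX - e) ^ 2)
      (γ ^ 4 - 2 * (2 * (ϖX - e) - ϖX) * ((1:ℝ) ^ 2 - ϖC) * γ ^ 2
        + ((2 * (ϖX - e) - ϖX) ^ 2 - (ϖX - e) ^ 2) * ((1:ℝ) ^ 2 - ϖC) ^ 2) hconst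
    exact ⟨1, s, hs, by linarith [hroot]⟩
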